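/- (Gauss bound for neighborhoods of convex boundaries.) Let $\Omega \subset \mathbb{R}^D$ be an open bounded convex set containing a ball of radius $r(\Omega)$ (the inradius). Then for any $0 < r < r(\Omega)$, the Lebesgue measure of the $r$-neighborhood of the boundary $\partial\Omega$ satisfies $\mathrm{mes}(\mathcal{N}_r(\partial\Omega)) = O_D\big(\frac{r}{r(\Omega)}\big) \, \mathrm{mes}(\Omega)$, i.e. there is a constant $C_D$ depending only on $D$ with $\mathrm{mes}(\mathcal{N}_r(\partial\Omega)) \le C_D \frac{r}{r(\Omega)} \mathrm{mes}(\Omega)$. -/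

import Mathlib

open MeasureTheory Metric
open Set

lemma poly_aux (n : ℕ) {t : ℝ} (h0 : 0 ≤ t) (h1 : t ≤ 1) :
    (1+t)^n - (1-t)^n ≤ n * 2^n * t := by
  induction n with
  | zero => simp
  | succ n ih =>
    have hb0 : (0:ℝ) ≤ 1 - t := by linarith
    have hbn : (1-t)^n ≤ 1 := pow_le_one₀ hb0 (by linarith)
    have hbn0 : (0:ℝ) ≤ (1-t)^n := pow_nonneg hb0 n
    have hmono : (1-t)^n ≤ (1+t)^n := pow_le_pow_left₀ hb0 (by linarith) n
    have h2n : (1:ℝ) ≤ 2^n := one_le_pow₀ (by norm_num)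
    have hX0 : (0:ℝ) ≤ (1+t)^n - (1-t)^n := by linarith
    have hn0 : (0:ℝ) ≤ (n:ℝ) * 2^n * t := by positivity
    have key : (1+t)^(n+1) - (1-t)^(n+1)
        = (1+t)*((1+t)^n - (1-t)^n) + (2*t)*(1-t)^n := by ring
    rw [key, pow_succ]
    push_cast
    nlinarith [mul_le_mul_of_nonneg_left ih (by linarith : (0:ℝ) ≤ 1+t),
      mul_le_mul_of_nonneg_right h2n h0,
      mul_le_mul_of_nonneg_right hbn (by linarith : (0:ℝ) ≤ 2*t),
      mul_le_mul_of_nonneg_right hX0 h0, mul_le_of_le_one_left hn0 h1]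


/-- Gauss bound for neighborhoods of convex boundaries: if `Ω ⊂ ℝ^D` is a convex body
containing a ball of radius `ρ` (so its inradius is at least `ρ`), then for any
`0 < r < ρ` the `r`-neighborhood of `∂Ω` has measure at most `C_D · (r/ρ) · mes(Ω)`. -/
theorem stmt_8 (D : ℕ) :
    ∃ C : ℝ, 0 < C ∧
      ∀ (Ω : Set (EuclideanSpace ℝ (Fin D))) (ρ r : ℝ),
        IsOpen Ω → Bornology.IsBounded Ω → Convex ℝ Ω →
        (∃ x, ball x ρ ⊆ Ω) → 0 < r → r < ρ →
        volume (cthickening r (frontier Ω)) ≤ ENNReal.ofReal (C * (r / ρ)) * volume Ω := by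
  refine ⟨(D:ℝ) * 2^D + 1, by positivity, ?_⟩
  rintro Ω ρ r hΩo hΩb hΩc ⟨x, hx⟩ hr hrρ
  have hρ : 0 < ρ := hr.trans hrρ
  have hρ0 : ρ ≠ 0 := hρ.ne'
  have hr0 : r ≠ 0 := hr.ne'
  obtain ⟨t, ht⟩ : ∃ t : ℝ, t = r / ρ := ⟨_, rfl⟩
  have ht0 : 0 < t := ht ▸ div_pos hr hρ
  have ht1 : t < 1 := ht ▸ (div_lt_one hρ).2 hrρ
  have h1t : (1:ℝ) + t ≠ 0 := by positivity
  have htρ : t * ρ = r := by rw [ht]; exact div_mul_cancel₀ r hρ0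
  have hclconv : Convex ℝ (closure Ω) := hΩc.closure
  have hball : closedBall x ρ ⊆ closure Ω := by
    rw [← closure_ball x hρ0]; exact closure_mono hx
  have hxΩ : x ∈ Ω := hx (mem_ball_self hρ)
  set A := AffineMap.homothety x (1+t) '' closure Ω with hA
  set B := AffineMap.homothety x (1-t) '' Ω with hB
  -- Upper inclusion
  have hAsub : cthickening r (frontier Ω) ⊆ A := by
    intro z hz
    have hz' : z ∈ cthickening r (closure Ω) :=
      cthickening_subset_of_subset _ frontier_subset_closure hz
    rw [cthickening_eq_biUnion_closedBall _ hr.le] at hz'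
    simp only [closure_closure, mem_iUnion, exists_prop] at hz'
    obtain ⟨a, ha, hza⟩ := hz'
    set v := z - a with hv
    have hvr : ‖v‖ ≤ r := by
      rw [mem_closedBall, dist_eq_norm] at hza; exact hza
    set p := x + (ρ/r) • v with hp
    have hpmem : p ∈ closure Ω := by
      apply hball
      rw [mem_closedBall, dist_eq_norm]
      have : p - x = (ρ/r) • v := by rw [hp]; abel
      rw [this, norm_smul, Real.norm_eq_abs, abs_of_pos (div_pos hρ hr)]
      calc ρ/r * ‖v‖ ≤ ρ/r * r := by
              apply mul_le_mul_of_nonneg_left hvr (div_pos hρ hr).le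
        _ = ρ := div_mul_cancel₀ ρ hr0
    set w := (1/(1+t)) • a + (t/(1+t)) • p with hw
    have hwmem : w ∈ closure Ω := by
      apply hclconv ha hpmem (by positivity) (by positivity)
      field_simp
    refine ⟨w, hwmem, ?_⟩
    rw [AffineMap.homothety_apply]
    simp only [vsub_eq_sub, vadd_eq_add, hw, hp, hv]
    match_scalars <;> field_simp
    all_goals first
    | ring1
    | (rw [← htρ]; ring1)
    | exact Or.inl htρ
    | tauto
  -- Disjointness
  have hBdisj : ∀ z ∈ B, z ∉ cthickening r (frontier Ω) := by
    rintro z ⟨y, hy, rfl⟩ hzc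
    obtain ⟨ε, hε, hballε⟩ := Metric.isOpen_iff.1 hΩo y hy
    set z := AffineMap.homothety x (1-t) y with hz
    obtain ⟨r', hr'⟩ : ∃ r' : ℝ, r' = r + (1-t)*ε := ⟨_, rfl⟩
    have hrr' : r < r' := by nlinarith
    have hr'0 : 0 < r' := hr.trans hrr'
    have hsub : ball z r' ⊆ Ω := by
      intro w hw
      set u := w - z with hu
      have hun : ‖u‖ < r' := by
        rw [mem_ball, dist_eq_norm] at hw; exact hw
      have hpp : y + (ε/r') • u ∈ Ω := by
        apply hballε
        rw [mem_ball, dist_eq_norm]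
        have : y + (ε/r') • u - y = (ε/r') • u := by abel
        rw [this, norm_smul, Real.norm_eq_abs, abs_of_pos (div_pos hε hr'0)]
        calc ε/r' * ‖u‖ < ε/r' * r' := by
                exact mul_lt_mul_of_pos_left hun (div_pos hε hr'0)
          _ = ε := div_mul_cancel₀ ε hr'0.ne'
      have hqq : x + (ρ/r') • u ∈ Ω := by
        apply hx
        rw [mem_ball, dist_eq_norm]
        have : x + (ρ/r') • u - x = (ρ/r') • u := by abel
        rw [this, norm_smul, Real.norm_eq_abs, abs_of_pos (div_pos hρ hr'0)]
        calc ρ/r' * ‖u‖ < ρ/r' * r' := by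
                exact mul_lt_mul_of_pos_left hun (div_pos hρ hr'0)
          _ = ρ := div_mul_cancel₀ ρ hr'0.ne'
      have hdecomp : w = (1-t) • (y + (ε/r') • u) + t • (x + (ρ/r') • u) := by
        have hwz : w = z + u := by rw [hu]; abel
        rw [hwz, hz, AffineMap.homothety_apply]
        simp only [vsub_eq_sub, vadd_eq_add]
        have hr'ne : r' ≠ 0 := hr'0.ne'
        match_scalars <;> field_simp
        all_goals (subst hr' htρ; ring1)
      rw [hdecomp]
      exact hΩc hpp hqq (by linarith) ht0.le (by ring)
    rw [mem_cthickening_iff] at hzc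
    have hge : ENNReal.ofReal r' ≤ EMetric.infEdist z (frontier Ω) := by
      apply EMetric.le_infEdist.2
      intro p hp
      have hpΩ : p ∉ Ω := by
        rw [hΩo.frontier_eq] at hp; exact hp.2
      have hdist : r' ≤ dist z p := by
        by_contra hlt
        push_neg at hlt
        exact hpΩ (hsub (by rwa [mem_ball, dist_comm]))
      rw [edist_dist]
      exact ENNReal.ofReal_le_ofReal hdist
    have : ENNReal.ofReal r' ≤ ENNReal.ofReal r := hge.trans hzc
    rw [ENNReal.ofReal_le_ofReal_iff hr.le] at this
    linarith
  -- B ⊆ A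
  have hBsubA : B ⊆ A := by
    rintro z ⟨y, hy, rfl⟩
    obtain ⟨c, hc⟩ : ∃ c : ℝ, c = (1-t)/(1+t) := ⟨_, rfl⟩
    have hc0 : 0 ≤ c := by rw [hc]; exact div_nonneg (by linarith) (by positivity)
    have hc1 : c ≤ 1 := by
      rw [hc, div_le_one (by positivity)]; linarith
    refine ⟨(1-c) • x + c • y, subset_closure (hΩc hxΩ hy (by linarith) hc0 (by ring)), ?_⟩
    rw [AffineMap.homothety_apply, AffineMap.homothety_apply]
    simp only [vsub_eq_sub, vadd_eq_add]
    have hcc : (1+t) * c = 1 - t := by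
      rw [hc]; field_simp
    match_scalars <;> nlinarith [hcc]
  -- openness / measurability of B
  have hBopen : IsOpen B := by
    have hcne : (1:ℝ) - t ≠ 0 := by linarith
    have hBeq : B = (fun y => (1-t) • y + (x - (1-t) • x)) '' Ω := by
      rw [hB]; apply image_congr; intro y _
      rw [AffineMap.homothety_apply]
      simp only [vsub_eq_sub, vadd_eq_add]
      module
    rw [hBeq]
    exact (((Homeomorph.smulOfNeZero _ hcne).trans
      (Homeomorph.addRight (x - (1-t) • x))).isOpen_image).2 hΩo
  -- measure computations
  have hμΩfin : volume Ω ≠ ⊤ := hΩb.measure_lt_top.ne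
  have hclvol : volume (closure Ω) = volume Ω := by
    apply le_antisymm
    · calc volume (closure Ω) = volume (Ω ∪ frontier Ω) := by
            rw [← closure_eq_self_union_frontier]
        _ ≤ volume Ω + volume (frontier Ω) := measure_union_le _ _
        _ = volume Ω := by rw [hΩc.addHaar_frontier volume, add_zero]
    · exact measure_mono subset_closure
  have hμA : volume A = ENNReal.ofReal ((1+t)^D) * volume Ω := by
    rw [hA, Measure.addHaar_image_homothety, hclvol, finrank_euclideanSpace_fin,
      abs_of_nonneg (by positivity)]
  have hμB : volume B = ENNReal.ofReal ((1-t)^D) * volume Ω := by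
    rw [hB, Measure.addHaar_image_homothety, finrank_euclideanSpace_fin,
      abs_of_nonneg (pow_nonneg (by linarith) D)]
  have hkey : volume B + volume (cthickening r (frontier Ω)) ≤ volume A := by
    rw [← measure_union (Set.disjoint_left.2 hBdisj) isClosed_cthickening.measurableSet]
    exact measure_mono (union_subset hBsubA hAsub)
  have h1 : volume (cthickening r (frontier Ω)) ≤ volume A - volume B :=
    ENNReal.le_sub_of_add_le_left (by rw [hμB]; exact ENNReal.mul_ne_top ENNReal.ofReal_ne_top hμΩfin) hkey
  have h2 : volume A - volume B = ENNReal.ofReal ((1+t)^D - (1-t)^D) * volume Ω := by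
    rw [hμA, hμB, ← ENNReal.sub_mul (fun _ _ => hμΩfin),
      ENNReal.ofReal_sub _ (pow_nonneg (by linarith) D)]
  refine h1.trans (h2.le.trans ?_)
  apply mul_le_mul_left
  apply ENNReal.ofReal_le_ofReal
  rw [← ht]
  calc (1+t)^D - (1-t)^D ≤ D * 2^D * t := poly_aux D ht0.le ht1.le
    _ ≤ ((D:ℝ) * 2^D + 1) * t := by nlinarith
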